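/- arXiv:2407.02033 — 2 statements merged into one kernel-verified Lean document; each statement's English description precedes it below -/
import Mathlib

section
/- Let I be a set, let f : ℕ → I be a surjection all of whose fibers are infinite, and for each i ∈ I let B i be a set and g i : ℕ → B i a surjection all of whose fibers are infinite. Define h : ℕ → ⋃ i, B i by h(n) = g (f n) (m), where m is the cardinality of {k < n : f k = f n}. Then h is a surjection onto ⋃ i, B i and every fiber of h is infinite. -/
/-- interleaving a family of infinite-to-one surjections onto sets `B i`
along an infinite-to-one surjective index function `f` yields an infinite-to-one
surjection onto the union `⋃ i, B i`. -/
theorem stmt_0 {I X : Type*} (f : ℕ → I) (hf : Function.Surjective f)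
    (hffib : ∀ i, {n : ℕ | f n = i}.Infinite)
    (B : I → Set X) (g : ∀ i : I, ℕ → X)
    (hg : ∀ i, Set.range (g i) = B i)
    (hgfib : ∀ i, ∀ x ∈ B i, {n : ℕ | g i n = x}.Infinite)
    (h : ℕ → X)
    (hh : ∀ n, h n = g (f n) ({k : ℕ | k < n ∧ f k = f n}.ncard)) :
    Set.range h = ⋃ i, B i ∧ ∀ x ∈ ⋃ i, B i, {n : ℕ | h n = x}.Infinite := by
  classical
  -- for each i, the ncard counting function equals Nat.count
  have hcount : ∀ i n, f n = i →
      {k : ℕ | k < n ∧ f k = f n}.ncard = Nat.count (fun k => f k = i) n := by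
    intro i n hn
    rw [Nat.count_eq_card_filter_range]
    have : {k : ℕ | k < n ∧ f k = f n}
        = ↑((Finset.range n).filter (fun k => f k = i)) := by
      ext k; simp [hn, and_comm, Finset.mem_filter]
    rw [this, Set.ncard_coe_finset]
  have key : ∀ i m, f (Nat.nth (fun k => f k = i) m) = i ∧
      h (Nat.nth (fun k => f k = i) m) = g i m := by
    intro i m
    have hpinf : (setOf fun k => f k = i).Infinite := hffib i
    have h1 : f (Nat.nth (fun k => f k = i) m) = i :=
      Nat.nth_mem_of_infinite hpinf m
    refine ⟨h1, ?_⟩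
    rw [hh, hcount i _ h1, Nat.count_nth_of_infinite hpinf, h1]
  constructor
  · ext x
    constructor
    · rintro ⟨n, rfl⟩
      rw [hh]
      exact Set.mem_iUnion.2 ⟨f n, (hg (f n)) ▸ Set.mem_range_self _⟩
    · intro hx
      obtain ⟨i, hxi⟩ := Set.mem_iUnion.1 hx
      obtain ⟨m, hm⟩ := (hg i ▸ hxi : x ∈ Set.range (g i))
      exact ⟨Nat.nth (fun k => f k = i) m, by rw [(key i m).2, hm]⟩
  · intro x hx
    obtain ⟨i, hxi⟩ := Set.mem_iUnion.1 hx
    have hsub : (Nat.nth (fun k => f k = i)) '' {m : ℕ | g i m = x}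
        ⊆ {n : ℕ | h n = x} := by
      rintro _ ⟨m, hm, rfl⟩
      simp only [Set.mem_setOf_eq] at hm ⊢
      rw [(key i m).2, hm]
    exact Set.Infinite.mono hsub
      ((hgfib i x hxi).image ((Nat.nth_injective (hffib i)).injOn))
end

section
/- Let P be a poset, S a group of order automorphisms of P, 𝓕 a filter of subgroups of S such that for every p ∈ P the stabilizer S_p = {g ∈ S : g(p) = p} belongs to 𝓕. Let G ⊆ P be a filter that is symmetrically generic: for every dense open D ⊆ P and every X ∈ 𝓕, (X·D) ∩ G ≠ ∅, where X·D = {g(d) : g ∈ X, d ∈ D}. Then for every dense open D ⊆ P and every pair (g, X) with g ∈ S and X ∈ 𝓕, there exist r ∈ X and d ∈ D such that r(g(d)) ∈ G; consequently the pair (r·g, X ∩ S_{r(g(d))}) extends (g, X) in the shuffling poset and 'forces' the shuffled filter to meet D. -/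
/-- the density argument of the Shuffling Lemma. If `S` acts on the
poset `P` by order automorphisms, every stabilizer belongs to the subgroup filter
`𝓕`, and `G` is a symmetrically generic filter (it meets `X·D` for every dense open
`D` and every `X ∈ 𝓕`), then for every dense open `D` and every pair `(g, X)` with
`g ∈ S`, `X ∈ 𝓕`, there are `r ∈ X` and `d ∈ D` with `r • (g • d) ∈ G`. -/
theorem stmt_12 {P S : Type*} [PartialOrder P] [Group S] [MulAction S P]
    (hact : ∀ (g : S) (p q : P), p ≤ q ↔ g • p ≤ g • q)
    (𝓕 : Set (Subgroup S))
    (hstab : ∀ p : P, MulAction.stabilizer S p ∈ 𝓕)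
    (G : Set P)
    (hGup : ∀ p ∈ G, ∀ q : P, p ≤ q → q ∈ G)
    (hGdir : ∀ p ∈ G, ∀ q ∈ G, ∃ r ∈ G, r ≤ p ∧ r ≤ q)
    (hsym : ∀ D : Set P,
      (∀ p : P, ∃ d ∈ D, d ≤ p) →
      (∀ d ∈ D, ∀ q : P, q ≤ d → q ∈ D) →
      ∀ X ∈ 𝓕, ∃ s ∈ X, ∃ d ∈ D, s • d ∈ G) :
    ∀ D : Set P,
      (∀ p : P, ∃ d ∈ D, d ≤ p) →
      (∀ d ∈ D, ∀ q : P, q ≤ d → q ∈ D) →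
      ∀ (g : S), ∀ X ∈ 𝓕, ∃ r ∈ X, ∃ d ∈ D, r • (g • d) ∈ G := by
  intro D hdense hopen g X hX
  set D' : Set P := (g • ·) '' D with hD'
  have hdense' : ∀ p : P, ∃ d ∈ D', d ≤ p := by
    intro p
    obtain ⟨d, hd, hle⟩ := hdense (g⁻¹ • p)
    exact ⟨g • d, ⟨d, hd, rfl⟩, by
      have := (hact g d (g⁻¹ • p)).mp hle
      simpa using this⟩
  have hopen' : ∀ d ∈ D', ∀ q : P, q ≤ d → q ∈ D' := by
    rintro _ ⟨d, hd, rfl⟩ q hq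
    refine ⟨g⁻¹ • q, hopen d hd _ ?_, by simp⟩
    have := (hact g⁻¹ q (g • d)).mp hq
    simpa using this
  obtain ⟨s, hs, _, ⟨d, hd, rfl⟩, hmem⟩ := hsym D' hdense' hopen' X hX
  exact ⟨s, hs, d, hd, hmem⟩
end
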